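/- Let S = [[S₁₁, S₁₂],[S₂₁, S₂₂]] and S' := S₂₂ − S₂₁ S₁₁⁺ S₁₂. Suppose every conserved charge of S₁₁ extends to a conserved charge of S: for every d₁ with d₁ᵀ S₁₁ = 0 there exists d₂ such that (d₁, d₂)ᵀ S = 0. Then for every c₂ ∈ ker S' and every d₁ ∈ coker S₁₁, d₁ᵀ S₁₂ c₂ = 0; i.e., S₁₂ c₂ ∈ im S₁₁ for all c₂ ∈ ker S'. (The connecting map δ₁ : ker S' → coker S₁₁ is zero.) -/

import Mathlib

open Matrix

/-- if every conserved charge of `S₁₁` extends to a conserved charge of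
the full block matrix `S`, then the connecting map `δ₁ : ker S' → coker S₁₁` is zero:
for every `c₂ ∈ ker S'` and every `d₁ ∈ coker S₁₁`, `d₁ᵀ S₁₂ c₂ = 0`;
equivalently `S₁₂ c₂ ∈ im S₁₁` for all `c₂ ∈ ker S'`. -/
theorem connecting_map_zero
    (V₁ V₂ E₁ E₂ : Type) [Fintype V₁] [Fintype V₂] [Fintype E₁] [Fintype E₂]
    (S₁₁ : Matrix V₁ E₁ ℝ) (S₁₂ : Matrix V₁ E₂ ℝ)
    (S₂₁ : Matrix V₂ E₁ ℝ) (S₂₂ : Matrix V₂ E₂ ℝ)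
    (P : Matrix E₁ V₁ ℝ)
    (hP₁ : S₁₁ * P * S₁₁ = S₁₁) (hP₂ : P * S₁₁ * P = P)
    (hP₃ : (S₁₁ * P)ᵀ = S₁₁ * P) (hP₄ : (P * S₁₁)ᵀ = P * S₁₁)
    (hext : ∀ d₁ : V₁ → ℝ, Matrix.vecMul d₁ S₁₁ = 0 →
      ∃ d₂ : V₂ → ℝ,
        Matrix.vecMul (Sum.elim d₁ d₂) (Matrix.fromBlocks S₁₁ S₁₂ S₂₁ S₂₂) = 0) :
    (∀ c₂ : E₂ → ℝ, (S₂₂ - S₂₁ * P * S₁₂).mulVec c₂ = 0 →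
      ∀ d₁ : V₁ → ℝ, Matrix.vecMul d₁ S₁₁ = 0 →
        dotProduct d₁ (S₁₂.mulVec c₂) = 0) ∧
    (∀ c₂ : E₂ → ℝ, (S₂₂ - S₂₁ * P * S₁₂).mulVec c₂ = 0 →
      ∃ y : E₁ → ℝ, S₁₁.mulVec y = S₁₂.mulVec c₂) := by
  have part1 : ∀ c₂ : E₂ → ℝ, (S₂₂ - S₂₁ * P * S₁₂).mulVec c₂ = 0 →
      ∀ d₁ : V₁ → ℝ, Matrix.vecMul d₁ S₁₁ = 0 →
        dotProduct d₁ (S₁₂.mulVec c₂) = 0 := by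
    intro c₂ hc d₁ hd
    obtain ⟨d₂, h⟩ := hext d₁ hd
    rw [Matrix.vecMul_fromBlocks] at h
    have h1 : Matrix.vecMul d₁ S₁₁ + Matrix.vecMul d₂ S₂₁ = 0 :=
      funext fun i => by simpa using congrFun h (Sum.inl i)
    have h2 : Matrix.vecMul d₁ S₁₂ + Matrix.vecMul d₂ S₂₂ = 0 :=
      funext fun i => by simpa using congrFun h (Sum.inr i)
    have h21 : Matrix.vecMul d₂ S₂₁ = 0 := by
      rw [hd, zero_add] at h1; exact h1
    have h12 : Matrix.vecMul d₁ S₁₂ = - Matrix.vecMul d₂ S₂₂ := by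
      linear_combination (norm := abel) h2
    have hcc : S₂₂.mulVec c₂ = (S₂₁ * P * S₁₂).mulVec c₂ := by
      have := hc
      rw [Matrix.sub_mulVec, sub_eq_zero] at this
      exact this
    rw [Matrix.dotProduct_mulVec, h12, neg_dotProduct,
      ← Matrix.dotProduct_mulVec, hcc, Matrix.dotProduct_mulVec,
      ← Matrix.vecMul_vecMul, ← Matrix.vecMul_vecMul, h21,
      Matrix.zero_vecMul, Matrix.zero_vecMul, zero_dotProduct, neg_zero]
  refine ⟨part1, ?_⟩
  intro c₂ hc
  classical
  set v : V₁ → ℝ := S₁₂.mulVec c₂ with hv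
  set M : Matrix V₁ V₁ ℝ := 1 - S₁₁ * P with hM
  have hMsymm : Mᵀ = M := by
    rw [hM, Matrix.transpose_sub, Matrix.transpose_one, hP₃]
  have hMS : M * S₁₁ = 0 := by
    rw [hM, Matrix.sub_mul, Matrix.one_mul, hP₁, sub_self]
  have hMM : M * M = M := by
    rw [hM]
    have : S₁₁ * P * (S₁₁ * P) = S₁₁ * P := by
      rw [← Matrix.mul_assoc, hP₁]
    rw [Matrix.sub_mul, Matrix.one_mul, Matrix.mul_sub, Matrix.mul_one, this]
    abel
  have hd : Matrix.vecMul (Matrix.vecMul v M) S₁₁ = 0 := by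
    rw [Matrix.vecMul_vecMul, hMS, Matrix.vecMul_zero]
  have key : dotProduct (Matrix.vecMul v M) v = 0 := part1 c₂ hc _ hd
  have hMv : M.mulVec v = 0 := by
    have hvm : Matrix.vecMul v M = M.mulVec v := by
      conv_lhs => rw [← hMsymm]
      rw [Matrix.vecMul_transpose]
    have : dotProduct (M.mulVec v) (M.mulVec v) = 0 := by
      calc dotProduct (M.mulVec v) (M.mulVec v)
          = dotProduct (Matrix.vecMul v M) (M.mulVec v) := by rw [hvm]
        _ = dotProduct (Matrix.vecMul (Matrix.vecMul v M) M) v := by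
            rw [Matrix.dotProduct_mulVec]
        _ = dotProduct (Matrix.vecMul v (M * M)) v := by
            rw [Matrix.vecMul_vecMul]
        _ = dotProduct (Matrix.vecMul v M) v := by rw [hMM]
        _ = 0 := key
    exact dotProduct_self_eq_zero.mp this
  refine ⟨P.mulVec v, ?_⟩
  have h2 : (S₁₁ * P).mulVec v = v := by
    have := hMv
    rw [hM, Matrix.sub_mulVec, Matrix.one_mulVec, sub_eq_zero] at this
    exact this.symm
  rw [Matrix.mulVec_mulVec, h2]
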